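/- In the approximate-partition-of-unity setup: if j ∈ {1, …, N}^d and v ∈ ℤ^d satisfies max_i |v_i| ≥ 2 and j + v ∈ {1, …, N}^d, then ‖Φ_{j+v}^{N,d}‖_{W^{k,∞}(I_j^N)} ≤ max{1, (2k)^{2k} α^k} · ε. -/

import Mathlib

/-- Partial derivative in direction `i`. -/
noncomputable def pder {d : ℕ} (i : Fin d) (f : (Fin d → ℝ) → ℝ) : (Fin d → ℝ) → ℝ :=
  fun x => fderiv ℝ f x (Pi.single i 1)

/-- Multi-index partial derivative `D^α f`. -/
noncomputable def mder {d : ℕ} (α : Fin d → ℕ) (f : (Fin d → ℝ) → ℝ) : (Fin d → ℝ) → ℝ :=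
  (List.finRange d).foldl (fun g i => (pder i)^[α i] g) f

/-- `W^{k,∞}(S)` norm: `max_{|β| ≤ k} sup_{x ∈ S} |D^β f x|`. -/
noncomputable def sobNorm {d : ℕ} (k : ℕ) (S : Set (Fin d → ℝ)) (f : (Fin d → ℝ) → ℝ) : ℝ :=
  ⨆ p : {q : (Fin d → ℕ) × (Fin d → ℝ) // (∑ i, q.1 i) ≤ k ∧ q.2 ∈ S}, |mder p.1.1 f p.1.2|

/-- The univariate bump `ρ_j^N` from the approximate partition of unity. -/
noncomputable def rhoPU (N : ℕ) (α : ℝ) (j : ℤ) (y : ℝ) : ℝ :=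
  if j = 1 then 1 / 2 - 1 / 2 * Real.tanh (α * (y - 1 / N))
  else if j = (N : ℤ) then 1 / 2 * Real.tanh (α * (y - ((N : ℝ) - 1) / N)) + 1 / 2
  else 1 / 2 * Real.tanh (α * (y - ((j : ℝ) - 1) / N))
    - 1 / 2 * Real.tanh (α * (y - (j : ℝ) / N))

/-- `Φ_j^{N,d}(x) = ∏ᵢ ρ_{jᵢ}^N(xᵢ)`. -/
noncomputable def PhiPU (d N : ℕ) (α : ℝ) (j : Fin d → ℤ) (x : Fin d → ℝ) : ℝ :=
  ∏ i, rhoPU N α (j i) (x i)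

/-- The open box `I_j^N = ∏ᵢ ((jᵢ-1)/N, jᵢ/N)`. -/
def IboxPU (d N : ℕ) (j : Fin d → ℤ) : Set (Fin d → ℝ) :=
  {x | ∀ i, ((j i : ℝ) - 1) / N < x i ∧ x i < (j i : ℝ) / N}

section AuxPOU
open Real Polynomial Finset

lemma tanh_eq_fun : Real.tanh = fun x => Real.sinh x / Real.cosh x :=
  funext fun x => Real.tanh_eq_sinh_div_cosh x

lemma my_contDiff_tanh : ContDiff ℝ (⊤ : ℕ∞) Real.tanh := by
  rw [tanh_eq_fun]
  exact Real.contDiff_sinh.div Real.contDiff_cosh (fun x => (Real.cosh_pos x).ne')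

lemma my_abs_tanh_le_one (x : ℝ) : |Real.tanh x| ≤ 1 := by
  rw [Real.tanh_eq_sinh_div_cosh, abs_div, abs_of_pos (Real.cosh_pos x),
    div_le_one (Real.cosh_pos x), abs_le]
  constructor
  · have := Real.sinh_lt_cosh (-x)
    rw [Real.sinh_neg, Real.cosh_neg] at this
    linarith
  · exact (Real.sinh_lt_cosh x).le

lemma my_hasDerivAt_tanh (x : ℝ) : HasDerivAt Real.tanh (1 - Real.tanh x ^ 2) x := by
  have hc := Real.cosh_pos x
  have h := (Real.hasDerivAt_sinh x).div (Real.hasDerivAt_cosh x) hc.ne'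
  rw [tanh_eq_fun]
  refine h.congr_deriv ?_
  beta_reduce
  have h2 := Real.cosh_sq_sub_sinh_sq x
  field_simp

lemma my_tanh_monotone : Monotone Real.tanh := by
  have hd : ∀ x : ℝ, 0 ≤ deriv Real.tanh x := by
    intro x
    rw [(my_hasDerivAt_tanh x).deriv]
    have := my_abs_tanh_le_one x
    nlinarith [abs_nonneg (Real.tanh x), sq_abs (Real.tanh x), abs_le.mp this]
  exact monotone_of_deriv_nonneg (fun x => ((my_hasDerivAt_tanh x).differentiableAt)) hd

/-- The polynomials representing iterated derivatives of `tanh`. -/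

noncomputable def tanhPoly : ℕ → Polynomial ℝ
  | 0 => Polynomial.X
  | (n+1) => (1 - Polynomial.X ^ 2) * (tanhPoly n).derivative

lemma iteratedDeriv_tanh_eq (n : ℕ) (x : ℝ) :
    iteratedDeriv n Real.tanh x = (tanhPoly n).eval (Real.tanh x) := by
  induction n generalizing x with
  | zero => simp [tanhPoly]
  | succ n ih =>
    rw [iteratedDeriv_succ]
    have hfun : iteratedDeriv n Real.tanh = fun y => (tanhPoly n).eval (Real.tanh y) :=
      funext ih
    rw [hfun]
    have hD : HasDerivAt (fun y => (tanhPoly n).eval (Real.tanh y))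
        ((tanhPoly n).derivative.eval (Real.tanh x) * (1 - Real.tanh x ^ 2)) x :=
      ((tanhPoly n).hasDerivAt (Real.tanh x)).comp x (my_hasDerivAt_tanh x)
    rw [hD.deriv, tanhPoly]
    simp
    ring

lemma tanhPoly_natDegree (n : ℕ) : (tanhPoly n).natDegree ≤ n + 1 := by
  induction n with
  | zero => simpa [tanhPoly] using Polynomial.natDegree_X_le
  | succ n ih =>
    rw [tanhPoly]
    calc ((1 - Polynomial.X ^ 2 : Polynomial ℝ) * (tanhPoly n).derivative).natDegree
        ≤ (1 - Polynomial.X ^ 2 : Polynomial ℝ).natDegree + (tanhPoly n).derivative.natDegree :=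
          Polynomial.natDegree_mul_le
      _ ≤ 2 + n := by
          gcongr
          · refine le_trans (Polynomial.natDegree_sub_le _ _) ?_
            simp [Polynomial.natDegree_X_pow]
          · exact le_trans (Polynomial.natDegree_derivative_le _) (by omega)
      _ = n + 1 + 1 := by omega

noncomputable def tanhS (n : ℕ) : ℝ := ∑ i ∈ Finset.range (n + 2), |(tanhPoly n).coeff i|

lemma tanhS_le (n : ℕ) : tanhS n ≤ 2 ^ n * n.factorial := by
  induction n with
  | zero =>
    rw [tanhS]
    norm_num [tanhPoly, Finset.sum_range_succ]
  | succ n ih =>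
    set P := tanhPoly n with hP
    set D := P.derivative with hD
    have hdegP : P.natDegree ≤ n + 1 := tanhPoly_natDegree n
    have hcoeffP : ∀ i, n + 2 ≤ i → P.coeff i = 0 := fun i hi =>
      Polynomial.coeff_eq_zero_of_natDegree_lt (lt_of_le_of_lt hdegP (by omega))
    -- bound on |D.coeff i|
    have hDcoeff : ∀ i : ℕ, |D.coeff i| ≤ (n + 1) * |P.coeff (i + 1)| := by
      intro i
      rw [hD, Polynomial.coeff_derivative, abs_mul]
      by_cases hi : i ≤ n
      · have : |((i : ℝ) + 1)| = (i : ℝ) + 1 := abs_of_pos (by positivity)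
        rw [this]
        have h1 : (i : ℝ) + 1 ≤ (n : ℝ) + 1 := by exact_mod_cast by omega
        nlinarith [abs_nonneg (P.coeff (i + 1))]
      · have : P.coeff (i + 1) = 0 := hcoeffP _ (by omega)
        simp [this]
    -- sum of |D.coeff| over range (n+3)
    have hDsum : ∑ i ∈ Finset.range (n + 3), |D.coeff i| ≤ (n + 1) * tanhS n := by
      calc ∑ i ∈ Finset.range (n + 3), |D.coeff i|
          ≤ ∑ i ∈ Finset.range (n + 3), (n + 1) * |P.coeff (i + 1)| :=
            Finset.sum_le_sum fun i _ => hDcoeff i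
        _ = (n + 1) * ∑ i ∈ Finset.range (n + 3), |P.coeff (i + 1)| := by
            rw [Finset.mul_sum]
        _ ≤ (n + 1) * tanhS n := by
            have key : ∑ i ∈ Finset.range (n + 3), |P.coeff (i + 1)| ≤ tanhS n := by
              have h4 : ∑ i ∈ Finset.range (n + 4), |P.coeff i|
                  = ∑ i ∈ Finset.range (n + 3), |P.coeff (i + 1)| + |P.coeff 0| :=
                Finset.sum_range_succ' _ _
              have h5 : ∑ i ∈ Finset.range (n + 4), |P.coeff i| = tanhS n := by
                rw [tanhS, ← hP]
                rw [show n + 4 = (n + 2) + 1 + 1 by omega]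
                rw [Finset.sum_range_succ, Finset.sum_range_succ]
                rw [hcoeffP (n + 2) (by omega), hcoeffP (n + 3) (by omega)]
                simp
              have := abs_nonneg (P.coeff 0)
              linarith
            have hn1 : (0:ℝ) ≤ (n:ℝ) + 1 := by positivity
            exact mul_le_mul_of_nonneg_left key hn1
    -- sum of |(X^2 * D).coeff| over range (n+3)
    have hXDsum : ∑ i ∈ Finset.range (n + 3), |(D * Polynomial.X ^ 2).coeff i|
        ≤ (n + 1) * tanhS n := by
      have expand : ∀ i : ℕ, (D * Polynomial.X ^ 2).coeff i
          = if 2 ≤ i then D.coeff (i - 2) else 0 := fun i =>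
        Polynomial.coeff_mul_X_pow' D 2 i
      set f : ℕ → ℝ := fun i => |(D * Polynomial.X ^ 2).coeff i| with hf
      calc ∑ i ∈ Finset.range (n + 3), f i
          = ∑ i ∈ Finset.range (n + 2), f (i + 1) + f 0 := Finset.sum_range_succ' f (n + 2)
        _ = (∑ i ∈ Finset.range (n + 1), f (i + 1 + 1) + f (0 + 1)) + f 0 := by
            congr 1
            exact Finset.sum_range_succ' (fun i => f (i + 1)) (n + 1)
        _ = ∑ i ∈ Finset.range (n + 1), |D.coeff i| := by
            have h0 : f 0 = 0 := by rw [hf]; simp [expand 0]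
            have h1 : f (0 + 1) = 0 := by rw [hf]; simp [expand 1]
            rw [h0, h1, add_zero, add_zero]
            refine Finset.sum_congr rfl fun i _ => ?_
            rw [hf]
            simp only [expand (i + 1 + 1), show 2 ≤ i + 1 + 1 by omega, if_true,
              Nat.add_sub_cancel]
            rw [show i + 1 + 1 - 2 = i from by omega]
        _ ≤ ∑ i ∈ Finset.range (n + 3), |D.coeff i| := by
            apply Finset.sum_le_sum_of_subset_of_nonneg
            · exact Finset.range_subset_range.mpr (by omega)
            · intro i _ _; exact abs_nonneg _
        _ ≤ (n + 1) * tanhS n := hDsum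
    have hQ : tanhPoly (n + 1) = D - D * Polynomial.X ^ 2 := by
      rw [tanhPoly, ← hP, ← hD]; ring
    have main : tanhS (n + 1) ≤ 2 * (n + 1) * tanhS n := by
      rw [tanhS, hQ]
      calc ∑ i ∈ Finset.range (n + 3), |(D - D * Polynomial.X ^ 2).coeff i|
          ≤ ∑ i ∈ Finset.range (n + 3), (|D.coeff i| + |(D * Polynomial.X ^ 2).coeff i|) := by
            refine Finset.sum_le_sum fun i _ => ?_
            rw [Polynomial.coeff_sub]
            exact abs_sub _ _
        _ = ∑ i ∈ Finset.range (n + 3), |D.coeff i|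
            + ∑ i ∈ Finset.range (n + 3), |(D * Polynomial.X ^ 2).coeff i| :=
            Finset.sum_add_distrib
        _ ≤ (n + 1) * tanhS n + (n + 1) * tanhS n := add_le_add hDsum hXDsum
        _ = 2 * (n + 1) * tanhS n := by ring
    calc tanhS (n + 1) ≤ 2 * (n + 1) * tanhS n := main
      _ ≤ 2 * (n + 1) * (2 ^ n * n.factorial) := by
          refine mul_le_mul_of_nonneg_left ih (by positivity)
      _ = 2 ^ (n + 1) * (n + 1).factorial := by
          rw [Nat.factorial_succ]
          push_cast
          ring

/-- Global bound on iterated derivatives of tanh. -/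

lemma abs_iteratedDeriv_tanh_le (n : ℕ) (x : ℝ) :
    |iteratedDeriv n Real.tanh x| ≤ 2 ^ n * n.factorial := by
  rw [iteratedDeriv_tanh_eq]
  have hdeg : (tanhPoly n).natDegree < n + 2 := lt_of_le_of_lt (tanhPoly_natDegree n) (by omega)
  rw [Polynomial.eval_eq_sum_range' hdeg]
  refine le_trans (Finset.abs_sum_le_sum_abs _ _) (le_trans ?_ (tanhS_le n))
  rw [tanhS]
  refine Finset.sum_le_sum fun i _ => ?_
  rw [abs_mul, abs_pow]
  have h1 : |Real.tanh x| ^ i ≤ 1 := pow_le_one₀ (abs_nonneg _) (my_abs_tanh_le_one x)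
  nlinarith [abs_nonneg ((tanhPoly n).coeff i)]

/-- |tanh⁽ⁿ⁾| is even. -/

lemma abs_iteratedDeriv_tanh_neg (n : ℕ) (x : ℝ) :
    |iteratedDeriv n Real.tanh (-x)| = |iteratedDeriv n Real.tanh x| := by
  have h1 := iteratedDeriv_comp_neg n Real.tanh x
  have h2 : (fun y : ℝ => Real.tanh (-y)) = fun y => -Real.tanh y := by
    funext y; exact Real.tanh_neg y
  rw [h2] at h1
  rw [iteratedDeriv_fun_neg] at h1
  have h3 : |(-1:ℝ)^n • iteratedDeriv n Real.tanh (-x)| = |iteratedDeriv n Real.tanh (-x)| := by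
    rw [smul_eq_mul, abs_mul, abs_pow, abs_neg, abs_one, one_pow, one_mul]
  rw [← h3, ← h1, abs_neg]

/-- iterated derivative of an affine precomposition of tanh. -/

lemma iteratedDeriv_tanh_affine (m : ℕ) (a c : ℝ) (y : ℝ) :
    iteratedDeriv m (fun z => Real.tanh (a * (z - c))) y
      = a ^ m * iteratedDeriv m Real.tanh (a * (y - c)) := by
  have h1 : (fun z : ℝ => Real.tanh (a * (z - c)))
      = fun z => (fun w => Real.tanh (a * w)) (z + (-c)) := by
    funext z; rw [sub_eq_add_neg]
  rw [h1, iteratedDeriv_comp_add_const m (fun w => Real.tanh (a * w)) (-c)]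
  rw [iteratedDeriv_comp_const_mul (my_contDiff_tanh.of_le (mod_cast le_top)) a]
  rw [sub_eq_add_neg]

lemma contDiff_tanh_affine (a c : ℝ) : ContDiff ℝ (⊤ : ℕ∞) (fun z : ℝ => Real.tanh (a * (z - c))) :=
  my_contDiff_tanh.comp (contDiff_const.mul (contDiff_id.sub contDiff_const))

/-- iterated derivative of a linear combination plus constant. -/

lemma iteratedDeriv_linComb (m : ℕ) (c a b : ℝ) (f g : ℝ → ℝ)
    (hf : ContDiff ℝ (⊤ : ℕ∞) f) (hg : ContDiff ℝ (⊤ : ℕ∞) g) (x : ℝ) :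
    iteratedDeriv m (fun y => c + (a * f y + b * g y)) x
      = (if m = 0 then c else 0) + (a * iteratedDeriv m f x + b * iteratedDeriv m g x) := by
  induction m generalizing x with
  | zero => simp
  | succ m ih =>
    have hfm : Differentiable ℝ (iteratedDeriv m f) :=
      (hf.of_le (mod_cast le_top)).differentiable_iteratedDeriv'
    have hgm : Differentiable ℝ (iteratedDeriv m g) :=
      (hg.of_le (mod_cast le_top)).differentiable_iteratedDeriv'
    rw [iteratedDeriv_succ]
    have hrepr : iteratedDeriv m (fun y => c + (a * f y + b * g y))
        = fun x => (if m = 0 then c else 0)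
          + (a * iteratedDeriv m f x + b * iteratedDeriv m g x) := funext ih
    rw [hrepr, deriv_const_add, deriv_fun_add ((hfm x).const_mul a) ((hgm x).const_mul b),
      deriv_const_mul a (hfm x), deriv_const_mul b (hgm x),
      iteratedDeriv_succ, iteratedDeriv_succ]
    simp

lemma smooth_itD {f : ℝ → ℝ} (hf : ContDiff ℝ (⊤ : ℕ∞) f) (m : ℕ) :
    ContDiff ℝ (⊤ : ℕ∞) (iteratedDeriv m f) := by
  rw [iteratedDeriv_eq_iterate]
  exact ContDiff.iterate_deriv m hf

lemma pder_prod {d : ℕ} (g : Fin d → ℝ → ℝ) (hg : ∀ l, ContDiff ℝ (⊤ : ℕ∞) (g l)) (i : Fin d) :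
    pder i (fun x : Fin d → ℝ => ∏ l, g l (x l))
      = fun x => ∏ l, Function.update g i (deriv (g i)) l (x l) := by
  funext x
  have hcomp : ∀ l : Fin d, HasFDerivAt (fun x : Fin d → ℝ => g l (x l))
      (deriv (g l) (x l) • (ContinuousLinearMap.proj l : (Fin d → ℝ) →L[ℝ] ℝ)) x := by
    intro l
    have h1 : HasDerivAt (g l) (deriv (g l) (x l)) (x l) :=
      (((hg l).differentiable (by simp)) (x l)).hasDerivAt
    have h2 : HasFDerivAt (fun x : Fin d → ℝ => x l)
        (ContinuousLinearMap.proj l : (Fin d → ℝ) →L[ℝ] ℝ) x :=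
      (ContinuousLinearMap.proj l : (Fin d → ℝ) →L[ℝ] ℝ).hasFDerivAt
    exact h1.comp_hasFDerivAt x h2
  have hprod := HasFDerivAt.finset_prod (u := Finset.univ)
      (g := fun l (x : Fin d → ℝ) => g l (x l))
      (g' := fun l => deriv (g l) (x l) • (ContinuousLinearMap.proj l : (Fin d → ℝ) →L[ℝ] ℝ))
      (fun l _ => hcomp l)
  rw [pder, hprod.fderiv]
  rw [ContinuousLinearMap.sum_apply]
  rw [Finset.sum_eq_single i]
  · rw [ContinuousLinearMap.smul_apply, ContinuousLinearMap.smul_apply,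
      ContinuousLinearMap.proj_apply, Pi.single_eq_same]
    rw [← Finset.mul_prod_erase Finset.univ
      (fun l => Function.update g i (deriv (g i)) l (x l)) (Finset.mem_univ i)]
    rw [Function.update_self]
    have : ∏ l ∈ Finset.univ.erase i, Function.update g i (deriv (g i)) l (x l)
        = ∏ l ∈ Finset.univ.erase i, g l (x l) := by
      refine Finset.prod_congr rfl fun l hl => ?_
      rw [Function.update_of_ne (Finset.ne_of_mem_erase hl)]
    rw [this]
    simp [smul_eq_mul]
    ring
  · intro l _ hl
    rw [ContinuousLinearMap.smul_apply, ContinuousLinearMap.smul_apply,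
      ContinuousLinearMap.proj_apply, Pi.single_eq_of_ne hl]
    simp
  · intro h
    exact absurd (Finset.mem_univ i) h

lemma pderIter_prod {d : ℕ} (g : Fin d → ℝ → ℝ) (hg : ∀ l, ContDiff ℝ (⊤ : ℕ∞) (g l))
    (i : Fin d) (m : ℕ) :
    (pder i)^[m] (fun x : Fin d → ℝ => ∏ l, g l (x l))
      = fun x => ∏ l, Function.update g i (iteratedDeriv m (g i)) l (x l) := by
  induction m with
  | zero =>
    simp only [Function.iterate_zero, id_eq, iteratedDeriv_zero, Function.update_eq_self]
  | succ m ih =>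
    rw [Function.iterate_succ_apply', ih]
    set g' := Function.update g i (iteratedDeriv m (g i)) with hg'
    have hg'smooth : ∀ l, ContDiff ℝ (⊤ : ℕ∞) (g' l) := by
      intro l
      rcases eq_or_ne l i with rfl | hne
      · rw [hg', Function.update_self]
        exact smooth_itD (hg l) m
      · rw [hg', Function.update_of_ne hne]
        exact hg l
    rw [pder_prod g' hg'smooth i]
    funext x
    refine Finset.prod_congr rfl fun l _ => ?_
    rcases eq_or_ne l i with rfl | hne
    · rw [Function.update_self, Function.update_self, hg', Function.update_self,
        ← iteratedDeriv_succ]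
    · rw [Function.update_of_ne hne, Function.update_of_ne hne, hg',
        Function.update_of_ne hne]

lemma foldl_pder {d : ℕ} (β : Fin d → ℕ) (L : List (Fin d)) (hL : L.Nodup) :
    ∀ g : Fin d → ℝ → ℝ, (∀ l, ContDiff ℝ (⊤ : ℕ∞) (g l)) →
    L.foldl (fun f i => (pder i)^[β i] f) (fun x : Fin d → ℝ => ∏ l, g l (x l))
      = fun x => ∏ l, iteratedDeriv (if l ∈ L then β l else 0) (g l) (x l) := by
  induction L with
  | nil => intro g hg; simp
  | cons i L' ihL =>
    intro g hg
    rw [List.foldl_cons, pderIter_prod g hg i (β i)]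
    set g' := Function.update g i (iteratedDeriv (β i) (g i)) with hg'
    have hg'smooth : ∀ l, ContDiff ℝ (⊤ : ℕ∞) (g' l) := by
      intro l
      rcases eq_or_ne l i with rfl | hne
      · rw [hg', Function.update_self]; exact smooth_itD (hg l) (β l)
      · rw [hg', Function.update_of_ne hne]; exact hg l
    rw [ihL (List.Nodup.of_cons hL) g' hg'smooth]
    funext x
    refine Finset.prod_congr rfl fun l _ => ?_
    rcases eq_or_ne l i with rfl | hne
    · have hnotmem : l ∉ L' := (List.nodup_cons.mp hL).1
      simp only [hnotmem, if_false, List.mem_cons, true_or, if_true, iteratedDeriv_zero,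
        hg', Function.update_self]
    · rw [hg', Function.update_of_ne hne]
      have : (l ∈ i :: L') ↔ (l ∈ L') := by
        simp [List.mem_cons, hne]
      simp only [this]

lemma mder_prod {d : ℕ} (β : Fin d → ℕ) (g : Fin d → ℝ → ℝ)
    (hg : ∀ l, ContDiff ℝ (⊤ : ℕ∞) (g l)) :
    mder β (fun x : Fin d → ℝ => ∏ l, g l (x l))
      = fun x => ∏ l, iteratedDeriv (β l) (g l) (x l) := by
  rw [mder, foldl_pder β (List.finRange d) (List.nodup_finRange d) g hg]
  funext x
  refine Finset.prod_congr rfl fun l _ => ?_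
  simp [List.mem_finRange]

lemma rho_smooth (N : ℕ) (α : ℝ) (J : ℤ) : ContDiff ℝ (⊤ : ℕ∞) (rhoPU N α J) := by
  unfold rhoPU
  split_ifs
  · exact contDiff_const.sub (contDiff_const.mul (contDiff_tanh_affine α (1 / N)))
  · exact (contDiff_const.mul (contDiff_tanh_affine α (((N : ℝ) - 1) / N))).add contDiff_const
  · exact (contDiff_const.mul (contDiff_tanh_affine α (((J : ℝ) - 1) / N))).sub
      (contDiff_const.mul (contDiff_tanh_affine α ((J : ℝ) / N)))

lemma rho_abs_le_one (N : ℕ) (α : ℝ) (J : ℤ) (y : ℝ) : |rhoPU N α J y| ≤ 1 := by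
  unfold rhoPU
  split_ifs
  · have := abs_le.mp (my_abs_tanh_le_one (α * (y - 1 / N)))
    rw [abs_le]; constructor <;> nlinarith [this.1, this.2]
  · have := abs_le.mp (my_abs_tanh_le_one (α * (y - ((N : ℝ) - 1) / N)))
    rw [abs_le]; constructor <;> nlinarith [this.1, this.2]
  · have h1 := abs_le.mp (my_abs_tanh_le_one (α * (y - ((J : ℝ) - 1) / N)))
    have h2 := abs_le.mp (my_abs_tanh_le_one (α * (y - (J : ℝ) / N)))
    rw [abs_le]; constructor <;> nlinarith [h1.1, h1.2, h2.1, h2.2]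

-- explicit formulas for iterated derivatives of rho

lemma itD_rho_one (N : ℕ) (α : ℝ) (m : ℕ) (y : ℝ) :
    iteratedDeriv m (rhoPU N α 1) y
      = (if m = 0 then (1:ℝ)/2 else 0)
        + (-(1/2)) * (α ^ m * iteratedDeriv m Real.tanh (α * (y - 1 / N))) := by
  have hrepr : rhoPU N α 1 = fun y => 1/2 + ((-(1/2)) * Real.tanh (α * (y - 1 / N))
      + 0 * Real.tanh (α * (y - 0))) := by
    funext z; simp only [rhoPU]
    split_ifs with h1
    · ring
    · exact absurd trivial h1
  rw [hrepr, iteratedDeriv_linComb m (1/2) (-(1/2)) 0 _ _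
    (contDiff_tanh_affine α (1 / N)) (contDiff_tanh_affine α 0),
    iteratedDeriv_tanh_affine]
  ring

lemma itD_rho_N (N : ℕ) (α : ℝ) (hN1 : (N : ℤ) ≠ 1) (m : ℕ) (y : ℝ) :
    iteratedDeriv m (rhoPU N α N) y
      = (if m = 0 then (1:ℝ)/2 else 0)
        + (1/2) * (α ^ m * iteratedDeriv m Real.tanh (α * (y - ((N:ℝ) - 1) / N))) := by
  have hrepr : rhoPU N α N = fun y => 1/2 + ((1/2) * Real.tanh (α * (y - ((N:ℝ) - 1) / N))
      + 0 * Real.tanh (α * (y - 0))) := by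
    funext z; simp only [rhoPU]
    split_ifs with h1
    · exact absurd h1 hN1
    · ring
  rw [hrepr, iteratedDeriv_linComb m (1/2) (1/2) 0 _ _
    (contDiff_tanh_affine α (((N:ℝ) - 1) / N)) (contDiff_tanh_affine α 0),
    iteratedDeriv_tanh_affine]
  ring

lemma itD_rho_mid (N : ℕ) (α : ℝ) (J : ℤ) (hJ1 : J ≠ 1) (hJN : J ≠ (N : ℤ)) (m : ℕ) (y : ℝ) :
    iteratedDeriv m (rhoPU N α J) y
      = (1/2) * (α ^ m * iteratedDeriv m Real.tanh (α * (y - ((J:ℝ) - 1) / N)))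
        + (-(1/2)) * (α ^ m * iteratedDeriv m Real.tanh (α * (y - (J:ℝ) / N))) := by
  have hrepr : rhoPU N α J = fun y => 0 + ((1/2) * Real.tanh (α * (y - ((J:ℝ) - 1) / N))
      + (-(1/2)) * Real.tanh (α * (y - (J:ℝ) / N))) := by
    funext z; simp only [rhoPU]
    split_ifs with h1
    · exact absurd h1 hJ1
    · ring
  rw [hrepr, iteratedDeriv_linComb m 0 (1/2) (-(1/2)) _ _
    (contDiff_tanh_affine α (((J:ℝ) - 1) / N)) (contDiff_tanh_affine α ((J:ℝ) / N)),
    iteratedDeriv_tanh_affine, iteratedDeriv_tanh_affine]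
  simp

/-- Global bound on derivatives of rho of positive order. -/

lemma rho_deriv_bound (N : ℕ) (α : ℝ) (hα : 0 ≤ α) (J : ℤ) (m : ℕ) (hm : 1 ≤ m) (y : ℝ) :
    |iteratedDeriv m (rhoPU N α J) y| ≤ α ^ m * (2 ^ m * m.factorial) := by
  have hm0 : m ≠ 0 := by omega
  have hpow : (0:ℝ) ≤ α ^ m := pow_nonneg hα m
  have hB : (0:ℝ) ≤ 2 ^ m * m.factorial := by positivity
  by_cases hJ1 : J = 1
  · subst hJ1
    rw [itD_rho_one, if_neg hm0, zero_add]
    have h1 := abs_iteratedDeriv_tanh_le m (α * (y - 1 / N))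
    rw [abs_mul, abs_mul, abs_of_nonneg hpow]
    have : |(-(1:ℝ)/2)| = 1/2 := by norm_num
    rw [show (-(1/2) : ℝ) = -1/2 by norm_num, this]
    nlinarith [abs_nonneg (iteratedDeriv m Real.tanh (α * (y - 1 / N)))]
  · by_cases hJN : J = (N : ℤ)
    · subst hJN
      by_cases hN1 : (N : ℤ) = 1
      · exact absurd hN1 hJ1
      · rw [itD_rho_N N α hN1, if_neg hm0, zero_add]
        have h1 := abs_iteratedDeriv_tanh_le m (α * (y - ((N:ℝ) - 1) / N))
        rw [abs_mul, abs_mul, abs_of_nonneg hpow]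
        rw [show |(1:ℝ)/2| = 1/2 by norm_num]
        nlinarith [abs_nonneg (iteratedDeriv m Real.tanh (α * (y - ((N:ℝ) - 1) / N)))]
    · rw [itD_rho_mid N α J hJ1 hJN]
      have h1 := abs_iteratedDeriv_tanh_le m (α * (y - ((J:ℝ) - 1) / N))
      have h2 := abs_iteratedDeriv_tanh_le m (α * (y - (J:ℝ) / N))
      refine le_trans (abs_add_le _ _) ?_
      rw [abs_mul, abs_mul, abs_mul, abs_mul, abs_of_nonneg hpow]
      rw [show |(1:ℝ)/2| = 1/2 by norm_num, show |(-(1/2):ℝ)| = 1/2 by norm_num]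
      nlinarith [abs_nonneg (iteratedDeriv m Real.tanh (α * (y - ((J:ℝ) - 1) / N))),
        abs_nonneg (iteratedDeriv m Real.tanh (α * (y - (J:ℝ) / N)))]

lemma rho_far (N k : ℕ) (hN : 1 ≤ N) (R ε α : ℝ)
    (hdec : ∀ m : ℕ, 1 ≤ m → m ≤ k →
      AntitoneOn (fun x : ℝ => |iteratedDeriv m Real.tanh x|) (Set.Ici R))
    (hε : 0 < ε) (hα : 0 < α) (hαR : R ≤ α / N) (hα1 : 1 - Real.tanh (α / N) ≤ ε)
    (hαm : ∀ m : ℕ, 1 ≤ m → m ≤ k → α ^ m * |iteratedDeriv m Real.tanh (α / N)| ≤ ε)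
    (a b : ℤ) (ha1 : 1 ≤ a) (haN : a ≤ (N:ℤ)) (hb1 : 1 ≤ b) (hbN : b ≤ (N:ℤ))
    (hfar : 2 ≤ |b - a|) (m : ℕ) (hmk : m ≤ k) (y : ℝ)
    (hy1 : ((a:ℝ) - 1) / N < y) (hy2 : y < (a:ℝ) / N) :
    |iteratedDeriv m (rhoPU N α b) y| ≤ ε := by
  have hN0 : (0:ℝ) < N := by exact_mod_cast hN
  have hαN : (0:ℝ) < α / N := by positivity
  have hcase : 2 ≤ b - a ∨ b - a ≤ -2 := by
    rcases abs_cases (b - a) with ⟨h1, _⟩ | ⟨h1, _⟩ <;> omega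
  have hterm : ∀ t : ℝ, 1 ≤ m → α / N ≤ |t| → α ^ m * |iteratedDeriv m Real.tanh t| ≤ ε := by
    intro t hm1 ht
    have heq : |iteratedDeriv m Real.tanh t| = |iteratedDeriv m Real.tanh (|t|)| := by
      rcases le_or_gt 0 t with h | h
      · rw [abs_of_nonneg h]
      · rw [abs_of_neg h, abs_iteratedDeriv_tanh_neg]
    have hmono := hdec m hm1 hmk (Set.mem_Ici.mpr hαR)
      (Set.mem_Ici.mpr (le_trans hαR ht)) ht
    have hα0 : (0:ℝ) ≤ α ^ m := pow_nonneg hα.le m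
    calc α ^ m * |iteratedDeriv m Real.tanh t|
        = α ^ m * |iteratedDeriv m Real.tanh (|t|)| := by rw [heq]
      _ ≤ α ^ m * |iteratedDeriv m Real.tanh (α / N)| :=
          mul_le_mul_of_nonneg_left hmono hα0
      _ ≤ ε := hαm m hm1 hmk
  have hleft : ∀ c : ℝ, y + 1 / N ≤ c → α * (y - c) ≤ -(α / N) := by
    intro c h
    have h2 : y - c ≤ -(1 / N) := by linarith
    calc α * (y - c) ≤ α * (-(1/N)) := mul_le_mul_of_nonneg_left h2 hα.le
      _ = -(α / N) := by ring
  have hright : ∀ c : ℝ, c ≤ y - 1 / N → α / N ≤ α * (y - c) := by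
    intro c h
    have h2 : 1 / N ≤ y - c := by linarith
    calc α / N = α * (1 / N) := by ring
      _ ≤ α * (y - c) := mul_le_mul_of_nonneg_left h2 hα.le
  have htanh1 : ∀ z : ℝ, Real.tanh z ≤ 1 := fun z => (abs_le.mp (my_abs_tanh_le_one z)).2
  have htanhm1 : ∀ z : ℝ, -1 ≤ Real.tanh z := fun z => (abs_le.mp (my_abs_tanh_le_one z)).1
  have hheps : (1 - Real.tanh (α / N)) / 2 ≤ ε := by
    have := htanh1 (α / N); linarith
  have hhalf_term : ∀ t : ℝ, 1 ≤ m → α / N ≤ |t| →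
      1/2 * (α ^ m * |iteratedDeriv m Real.tanh t|) ≤ ε := by
    intro t hm1 ht
    have h1 := hterm t hm1 ht
    have h2 : (0:ℝ) ≤ α ^ m * |iteratedDeriv m Real.tanh t| :=
      mul_nonneg (pow_nonneg hα.le m) (abs_nonneg _)
    linarith
  by_cases hb1' : b = 1
  · -- b = 1 : bump at the left end, need b ≤ a - 2
    subst hb1'
    have ha3 : 3 ≤ a := by rcases hcase with h | h <;> omega
    have hc : (1:ℝ)/N ≤ y - 1/N := by
      have h3 : (2:ℝ) ≤ (a:ℝ) - 1 := by exact_mod_cast (by omega : (2:ℤ) ≤ a - 1)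
      have h4 : (2:ℝ)/N ≤ ((a:ℝ) - 1)/N := by gcongr
      have h5 : (2:ℝ)/N = 1/N + 1/N := by ring
      linarith
    have ht : α / N ≤ α * (y - 1/N) := hright (1/N) hc
    rcases Nat.eq_zero_or_pos m with rfl | hm1
    · rw [iteratedDeriv_zero]
      have hval : rhoPU N α 1 y = 1/2 - 1/2 * Real.tanh (α * (y - 1/N)) := by
        simp [rhoPU]
      rw [hval]
      have hmono := my_tanh_monotone ht
      have h1 := htanh1 (α * (y - 1/N))
      rw [abs_of_nonneg (by linarith)]
      linarith
    · rw [itD_rho_one, if_neg (by omega : m ≠ 0), zero_add, abs_mul,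
        show |(-(1/2) : ℝ)| = 1/2 by norm_num, abs_mul,
        abs_of_nonneg (pow_nonneg hα.le m)]
      exact hhalf_term _ hm1 (le_trans ht (le_abs_self _))
  · by_cases hbN' : b = (N:ℤ)
    · -- b = N : bump at the right end, need a ≤ N - 2
      have hN1 : (N:ℤ) ≠ 1 := fun h => hb1' (hbN'.trans h)
      subst hbN'
      have haN2 : a ≤ (N:ℤ) - 2 := by rcases hcase with h | h <;> omega
      have hc : y + 1/N ≤ ((N:ℝ) - 1)/N := by
        have h3 : (a:ℝ) ≤ (N:ℝ) - 2 := by exact_mod_cast haN2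
        have h4 : (a:ℝ)/N ≤ ((N:ℝ) - 2)/N := by gcongr
        have h5 : ((N:ℝ) - 2)/N = ((N:ℝ) - 1)/N - 1/N := by ring
        linarith
      have ht : α * (y - ((N:ℝ) - 1)/N) ≤ -(α/N) := hleft _ hc
      have htabs : α / N ≤ |α * (y - ((N:ℝ) - 1)/N)| := by
        have : α / N ≤ -(α * (y - ((N:ℝ) - 1)/N)) := by linarith
        exact le_trans this (neg_le_abs _)
      rcases Nat.eq_zero_or_pos m with rfl | hm1
      · rw [iteratedDeriv_zero]
        have hval : rhoPU N α N y
            = 1/2 * Real.tanh (α * (y - ((N:ℝ) - 1)/N)) + 1/2 := by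
          simp [rhoPU, hN1]
        rw [hval]
        have hmono := my_tanh_monotone ht
        rw [Real.tanh_neg] at hmono
        have h1 := htanhm1 (α * (y - ((N:ℝ) - 1)/N))
        rw [abs_of_nonneg (by linarith)]
        linarith
      · rw [itD_rho_N N α hN1, if_neg (by omega : m ≠ 0), zero_add, abs_mul,
          show |(1/2 : ℝ)| = 1/2 by norm_num, abs_mul,
          abs_of_nonneg (pow_nonneg hα.le m)]
        exact hhalf_term _ hm1 htabs
    · -- middle bump
      set t1 := α * (y - ((b:ℝ) - 1)/N) with ht1def
      set t2 := α * (y - (b:ℝ)/N) with ht2def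
      have htt : t1 - t2 = α / N := by rw [ht1def, ht2def]; ring
      rcases hcase with hA | hB
      · -- b ≥ a + 2 : bump to the right
        have hc1 : y + 1/N ≤ ((b:ℝ) - 1)/N := by
          have h3 : (a:ℝ) + 1 ≤ (b:ℝ) - 1 := by exact_mod_cast (by omega : a + 1 ≤ b - 1)
          have h4 : ((a:ℝ) + 1)/N ≤ ((b:ℝ) - 1)/N := by gcongr
          have h5 : ((a:ℝ) + 1)/N = (a:ℝ)/N + 1/N := by ring
          linarith
        have ht1 : t1 ≤ -(α/N) := hleft _ hc1
        have ht2 : t2 ≤ -(α/N) := by linarith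
        have ht1abs : α/N ≤ |t1| := le_trans (by linarith) (neg_le_abs _)
        have ht2abs : α/N ≤ |t2| := le_trans (by linarith) (neg_le_abs _)
        rcases Nat.eq_zero_or_pos m with rfl | hm1
        · rw [iteratedDeriv_zero]
          have hval : rhoPU N α b y = 1/2 * Real.tanh t1 - 1/2 * Real.tanh t2 := by
            simp [rhoPU, hb1', hbN', ht1def, ht2def]
          rw [hval]
          have hmono12 := my_tanh_monotone (show t2 ≤ t1 by linarith)
          have hmono1 := my_tanh_monotone ht1
          rw [Real.tanh_neg] at hmono1
          have h1 := htanhm1 t2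
          rw [abs_of_nonneg (by linarith)]
          linarith
        · rw [itD_rho_mid N α b hb1' hbN']
          refine le_trans (abs_add_le _ _) ?_
          rw [abs_mul, abs_mul, abs_mul, abs_mul,
            show |(1/2 : ℝ)| = 1/2 by norm_num, show |(-(1/2) : ℝ)| = 1/2 by norm_num,
            abs_of_nonneg (pow_nonneg hα.le m)]
          have hh1 := hterm t1 hm1 ht1abs
          have hh2 := hterm t2 hm1 ht2abs
          have hp1 : (0:ℝ) ≤ α ^ m * |iteratedDeriv m Real.tanh t1| :=
            mul_nonneg (pow_nonneg hα.le m) (abs_nonneg _)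
          have hp2 : (0:ℝ) ≤ α ^ m * |iteratedDeriv m Real.tanh t2| :=
            mul_nonneg (pow_nonneg hα.le m) (abs_nonneg _)
          linarith
      · -- b ≤ a - 2 : bump to the left
        have hc2 : (b:ℝ)/N ≤ y - 1/N := by
          have h3 : (b:ℝ) ≤ (a:ℝ) - 2 := by exact_mod_cast (by omega : b ≤ a - 2)
          have h4 : (b:ℝ)/N ≤ ((a:ℝ) - 2)/N := by gcongr
          have h5 : ((a:ℝ) - 2)/N = ((a:ℝ) - 1)/N - 1/N := by ring
          linarith
        have ht2 : α/N ≤ t2 := hright _ hc2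
        have ht1 : α/N ≤ t1 := by linarith
        have ht1abs : α/N ≤ |t1| := le_trans ht1 (le_abs_self _)
        have ht2abs : α/N ≤ |t2| := le_trans ht2 (le_abs_self _)
        rcases Nat.eq_zero_or_pos m with rfl | hm1
        · rw [iteratedDeriv_zero]
          have hval : rhoPU N α b y = 1/2 * Real.tanh t1 - 1/2 * Real.tanh t2 := by
            simp [rhoPU, hb1', hbN', ht1def, ht2def]
          rw [hval]
          have hmono12 := my_tanh_monotone (show t2 ≤ t1 by linarith)
          have hmono2 := my_tanh_monotone ht2
          have h1 := htanh1 t1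
          rw [abs_of_nonneg (by linarith)]
          linarith
        · rw [itD_rho_mid N α b hb1' hbN']
          refine le_trans (abs_add_le _ _) ?_
          rw [abs_mul, abs_mul, abs_mul, abs_mul,
            show |(1/2 : ℝ)| = 1/2 by norm_num, show |(-(1/2) : ℝ)| = 1/2 by norm_num,
            abs_of_nonneg (pow_nonneg hα.le m)]
          have hh1 := hterm t1 hm1 ht1abs
          have hh2 := hterm t2 hm1 ht2abs
          have hp1 : (0:ℝ) ≤ α ^ m * |iteratedDeriv m Real.tanh t1| :=
            mul_nonneg (pow_nonneg hα.le m) (abs_nonneg _)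
          have hp2 : (0:ℝ) ≤ α ^ m * |iteratedDeriv m Real.tanh t2| :=
            mul_nonneg (pow_nonneg hα.le m) (abs_nonneg _)
          linarith

lemma factor_bound (N k : ℕ) (α : ℝ) (hα : 0 < α) (J : ℤ) (m : ℕ) (hm : m ≤ k) (y : ℝ) :
    |iteratedDeriv m (rhoPU N α J) y| ≤ (α * (2 * (k:ℝ)) ^ 2) ^ m := by
  rcases Nat.eq_zero_or_pos m with rfl | hm1
  · rw [iteratedDeriv_zero, pow_zero]; exact rho_abs_le_one N α J y
  · have hk1 : 1 ≤ k := le_trans hm1 hm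
    have hk0 : (1:ℝ) ≤ (k:ℝ) := by exact_mod_cast hk1
    refine le_trans (rho_deriv_bound N α hα.le J m hm1 y) ?_
    rw [mul_pow]
    refine mul_le_mul_of_nonneg_left ?_ (pow_nonneg hα.le m)
    have hfact : (m.factorial : ℝ) ≤ (k:ℝ) ^ m := by
      have h1 : m.factorial ≤ m ^ m := Nat.factorial_le_pow m
      have h2 : m ^ m ≤ k ^ m := Nat.pow_le_pow_left hm m
      exact_mod_cast le_trans h1 h2
    calc (2:ℝ)^m * m.factorial ≤ 2^m * (k:ℝ)^m := by
          refine mul_le_mul_of_nonneg_left hfact (by positivity)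
      _ = (2 * (k:ℝ))^m := by rw [mul_pow]
      _ ≤ ((2 * (k:ℝ))^2)^m := by
          rw [← pow_mul]
          refine pow_le_pow_right₀ (by linarith) (by omega)

end AuxPOU

/-- **Lemma 4.2.** In the approximate-partition-of-unity setup, if `j ∈ {1,…,N}^d` and
`v ∈ ℤ^d` with `max_i |v_i| ≥ 2` and `j + v ∈ {1,…,N}^d`, then
`‖Φ_{j+v}^{N,d}‖_{W^{k,∞}(I_j^N)} ≤ max{1, (2k)^{2k} α^k} ε`. -/
theorem partition_of_unity_far (d N k : ℕ) (hd : 1 ≤ d) (hN : 1 ≤ N)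
    (R : ℝ) (hR : 0 < R)
    (hdec : ∀ m : ℕ, 1 ≤ m → m ≤ k →
      AntitoneOn (fun x : ℝ => |iteratedDeriv m Real.tanh x|) (Set.Ici R))
    (ε α : ℝ) (hε : 0 < ε) (hα : 0 < α)
    (hαR : R ≤ α / N) (hα1 : 1 - Real.tanh (α / N) ≤ ε)
    (hαm : ∀ m : ℕ, 1 ≤ m → m ≤ k → α ^ m * |iteratedDeriv m Real.tanh (α / N)| ≤ ε)
    (j : Fin d → ℤ) (hj : ∀ i, 1 ≤ j i ∧ j i ≤ (N : ℤ))
    (v : Fin d → ℤ) (hv : ∃ i, 2 ≤ |v i|)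
    (hjv : ∀ i, 1 ≤ j i + v i ∧ j i + v i ≤ (N : ℤ)) :
    sobNorm k (IboxPU d N j) (PhiPU d N α (fun i => j i + v i)) ≤
      max 1 ((2 * (k : ℝ)) ^ (2 * k) * α ^ k) * ε := by
  obtain ⟨i0, hi0⟩ := hv
  have hRHS0 : (0:ℝ) ≤ max 1 ((2 * (k : ℝ)) ^ (2 * k) * α ^ k) * ε :=
    mul_nonneg (le_trans zero_le_one (le_max_left _ _)) hε.le
  refine Real.iSup_le ?_ hRHS0
  rintro ⟨⟨β, x⟩, hβ, hx⟩
  show |mder β (PhiPU d N α (fun i => j i + v i)) x| ≤ _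
  have hg : ∀ l : Fin d, ContDiff ℝ (⊤ : ℕ∞) ((fun l => rhoPU N α (j l + v l)) l) :=
    fun l => rho_smooth N α (j l + v l)
  have h1 : PhiPU d N α (fun i => j i + v i)
      = fun x : Fin d → ℝ => ∏ l, (fun l => rhoPU N α (j l + v l)) l (x l) := rfl
  rw [h1, mder_prod β _ hg, Finset.abs_prod]
  rw [← Finset.mul_prod_erase Finset.univ _ (Finset.mem_univ i0)]
  have hβi0 : β i0 ≤ k :=
    le_trans (Finset.single_le_sum (fun i _ => Nat.zero_le (β i)) (Finset.mem_univ i0)) hβ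
  have hfar0 : 2 ≤ |(j i0 + v i0) - j i0| := by
    rw [show j i0 + v i0 - j i0 = v i0 by ring]
    exact hi0
  have hfar : |iteratedDeriv (β i0) ((fun l => rhoPU N α (j l + v l)) i0) (x i0)| ≤ ε :=
    rho_far N k hN R ε α hdec hε hα hαR hα1 hαm (j i0) (j i0 + v i0)
      (hj i0).1 (hj i0).2 (hjv i0).1 (hjv i0).2 hfar0 (β i0) hβi0 (x i0) (hx i0).1 (hx i0).2
  set X : ℝ := α * (2 * (k:ℝ)) ^ 2 with hX
  have hX0 : 0 ≤ X := by positivity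
  have hrest : ∏ l ∈ Finset.univ.erase i0,
      |iteratedDeriv (β l) ((fun l => rhoPU N α (j l + v l)) l) (x l)|
      ≤ ∏ l ∈ Finset.univ.erase i0, X ^ (β l) := by
    refine Finset.prod_le_prod (fun l _ => abs_nonneg _) (fun l _ => ?_)
    exact factor_bound N k α hα (j l + v l) (β l)
      (le_trans (Finset.single_le_sum (fun i _ => Nat.zero_le (β i)) (Finset.mem_univ l)) hβ)
      (x l)
  have hsum : ∑ l ∈ Finset.univ.erase i0, β l ≤ k :=
    le_trans (Finset.sum_le_sum_of_subset (Finset.erase_subset i0 Finset.univ)) hβ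
  have hpoweq : ∏ l ∈ Finset.univ.erase i0, X ^ (β l)
      = X ^ (∑ l ∈ Finset.univ.erase i0, β l) :=
    Finset.prod_pow_eq_pow_sum _ _ _
  have hXmax : X ^ (∑ l ∈ Finset.univ.erase i0, β l)
      ≤ max 1 ((2 * (k : ℝ)) ^ (2 * k) * α ^ k) := by
    have hXk : X ^ k = (2 * (k : ℝ)) ^ (2 * k) * α ^ k := by
      rw [hX, mul_pow, ← pow_mul]; ring
    rcases le_or_gt X 1 with h | h
    · exact le_trans (pow_le_one₀ hX0 h) (le_max_left _ _)
    · refine le_trans (pow_le_pow_right₀ h.le hsum) ?_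
      rw [hXk]; exact le_max_right _ _
  have hprodnn : (0:ℝ) ≤ ∏ l ∈ Finset.univ.erase i0,
      |iteratedDeriv (β l) ((fun l => rhoPU N α (j l + v l)) l) (x l)| :=
    Finset.prod_nonneg (fun l _ => abs_nonneg _)
  calc |iteratedDeriv (β i0) ((fun l => rhoPU N α (j l + v l)) i0) (x i0)|
        * ∏ l ∈ Finset.univ.erase i0,
          |iteratedDeriv (β l) ((fun l => rhoPU N α (j l + v l)) l) (x l)|
      ≤ ε * max 1 ((2 * (k : ℝ)) ^ (2 * k) * α ^ k) := by
        refine mul_le_mul hfar (le_trans hrest (hpoweq ▸ hXmax)) hprodnn hε.le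
    _ = max 1 ((2 * (k : ℝ)) ^ (2 * k) * α ^ k) * ε := mul_comm _ _
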